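/- Let s > -3/2, b ∈ ℝ, and τ ≥ 1. Suppose b < -s/2 + 5/4. Then ∫_{2√τ}^{∞} ⟨ξ⟩^{2s} ⟨τ + ξ²⟩^{2b} ξ^{-6} dξ ≤ C τ^{s + 2b - 5/2} for a constant C = C(s,b) independent of τ. In particular τ² times this integral is bounded by C τ^{s + 2b - 1/2}. -/

import Mathlib

open MeasureTheory Real

lemma aux_rpow_bound (a M y x : ℝ) (hM : 1 ≤ M) (hy : 0 < y) (h1 : y ≤ x)
    (h2 : x ≤ M * y) : x ^ a ≤ M ^ |a| * y ^ a := by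
  have hx : 0 < x := lt_of_lt_of_le hy h1
  rcases le_or_gt 0 a with ha | ha
  · rw [abs_of_nonneg ha]
    calc x ^ a ≤ (M * y) ^ a := Real.rpow_le_rpow hx.le h2 ha
      _ = M ^ a * y ^ a := Real.mul_rpow (by linarith) hy.le
  · rw [abs_of_neg ha]
    have h3 : x ^ a ≤ y ^ a := Real.rpow_le_rpow_of_nonpos hy h1 ha.le
    have h4 : (1:ℝ) ≤ M ^ (-a) := Real.one_le_rpow hM (by linarith)
    nlinarith [Real.rpow_pos_of_pos hy a]

theorem stmt6 (s b : ℝ) (hs : s > -3/2) (hb : b < -s/2 + 5/4) :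
    ∃ C > 0, ∀ τ : ℝ, 1 ≤ τ →
      (∫ ξ in Set.Ioi (2 * Real.sqrt τ),
          (Real.sqrt (1 + ξ ^ 2)) ^ (2 * s) *
          (Real.sqrt (1 + (τ + ξ ^ 2) ^ 2)) ^ (2 * b) * ξ ^ (-6 : ℝ)) ≤
        C * τ ^ (s + 2 * b - 5/2) ∧
      τ ^ 2 * (∫ ξ in Set.Ioi (2 * Real.sqrt τ),
          (Real.sqrt (1 + ξ ^ 2)) ^ (2 * s) *
          (Real.sqrt (1 + (τ + ξ ^ 2) ^ 2)) ^ (2 * b) * ξ ^ (-6 : ℝ)) ≤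
        C * τ ^ (s + 2 * b - 1/2) := by
  set p : ℝ := 2*s + 4*b - 6 with hpdef
  have hp1 : p + 1 < 0 := by simp only [hpdef]; linarith
  have hplt : p < -1 := by linarith
  set K : ℝ := (Real.sqrt 2) ^ |2*s| * 2 ^ |2*b| with hKdef
  have hKpos : 0 < K :=
    mul_pos (Real.rpow_pos_of_pos (Real.sqrt_pos.2 two_pos) _)
      (Real.rpow_pos_of_pos two_pos _)
  have hCpos : 0 < K * 2 ^ (p+1) / (-(p+1)) := by
    apply div_pos (mul_pos hKpos (Real.rpow_pos_of_pos two_pos _)); linarith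
  refine ⟨K * 2 ^ (p+1) / (-(p+1)), hCpos, ?_⟩
  intro τ hτ
  have hτpos : 0 < τ := lt_of_lt_of_le one_pos hτ
  have hsq : 1 ≤ Real.sqrt τ := by
    rw [show (1:ℝ) = Real.sqrt 1 by simp]; exact Real.sqrt_le_sqrt hτ
  set c : ℝ := 2 * Real.sqrt τ with hcdef
  have hcpos : 0 < c := by positivity
  have hc2 : 2 ≤ c := by simp only [hcdef]; linarith
  -- pointwise bound on Ioi c
  have hbound : ∀ ξ ∈ Set.Ioi c,
      (Real.sqrt (1 + ξ ^ 2)) ^ (2 * s) *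
        (Real.sqrt (1 + (τ + ξ ^ 2) ^ 2)) ^ (2 * b) * ξ ^ (-6 : ℝ)
      ≤ K * ξ ^ p := by
    intro ξ hξ
    have hξ2 : 2 < ξ := lt_of_le_of_lt hc2 hξ
    have hξpos : 0 < ξ := by linarith
    have hξτ : 4 * τ ≤ ξ ^ 2 := by
      have : c ^ 2 ≤ ξ ^ 2 := by nlinarith [le_of_lt (Set.mem_Ioi.mp hξ)]
      have hcsq : c ^ 2 = 4 * τ := by
        simp only [hcdef]; rw [mul_pow, Real.sq_sqrt hτpos.le]; ring
      linarith [hcsq ▸ this]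
    -- first factor
    have hA : (Real.sqrt (1 + ξ ^ 2)) ^ (2 * s) ≤ (Real.sqrt 2) ^ |2*s| * ξ ^ (2*s) := by
      apply aux_rpow_bound _ _ _ _ (by
        rw [show (1:ℝ) = Real.sqrt 1 by simp]; exact Real.sqrt_le_sqrt one_le_two) hξpos
      · exact (Real.le_sqrt hξpos.le (by positivity)).2 (by nlinarith)
      · refine Real.sqrt_le_iff.2 ⟨by positivity, ?_⟩
        have h2 : Real.sqrt 2 ^ 2 = 2 := Real.sq_sqrt (by norm_num)
        nlinarith
    -- second factor
    have hB : (Real.sqrt (1 + (τ + ξ ^ 2) ^ 2)) ^ (2 * b) ≤ 2 ^ |2*b| * (ξ^2) ^ (2*b) := by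
      apply aux_rpow_bound _ _ _ _ one_le_two (by positivity)
      · exact (Real.le_sqrt (by positivity) (by positivity)).2 (by nlinarith)
      · refine Real.sqrt_le_iff.2 ⟨by positivity, ?_⟩
        nlinarith [sq_nonneg ξ, sq_nonneg (ξ^2 - 4*τ), hξτ, hξ2]
    have hC6 : (0:ℝ) ≤ ξ ^ (-6 : ℝ) := Real.rpow_nonneg hξpos.le _
    calc (Real.sqrt (1 + ξ ^ 2)) ^ (2 * s) *
          (Real.sqrt (1 + (τ + ξ ^ 2) ^ 2)) ^ (2 * b) * ξ ^ (-6 : ℝ)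
        ≤ ((Real.sqrt 2) ^ |2*s| * ξ ^ (2*s)) * (2 ^ |2*b| * (ξ^2) ^ (2*b)) * ξ ^ (-6 : ℝ) := by
          apply mul_le_mul_of_nonneg_right _ hC6
          exact mul_le_mul hA hB (Real.rpow_nonneg (Real.sqrt_nonneg _) _)
            (by positivity)
      _ = K * ξ ^ p := by
          rw [show ((ξ:ℝ)^2) ^ (2*b) = ξ ^ (4*b) by
            rw [← Real.rpow_natCast ξ 2, ← Real.rpow_mul hξpos.le]
            congr 1; push_cast; ring]
          rw [hKdef, hpdef, show 2*s + 4*b - 6 = 2*s + (4*b + (-6)) by ring,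
            Real.rpow_add hξpos, Real.rpow_add hξpos]
          ring
  have hnonneg : ∀ ξ ∈ Set.Ioi c,
      0 ≤ (Real.sqrt (1 + ξ ^ 2)) ^ (2 * s) *
        (Real.sqrt (1 + (τ + ξ ^ 2) ^ 2)) ^ (2 * b) * ξ ^ (-6 : ℝ) := by
    intro ξ hξ
    have hξpos : 0 < ξ := lt_trans hcpos hξ
    have := Real.rpow_nonneg hξpos.le (-6 : ℝ)
    positivity
  have hInt : IntegrableOn (fun ξ : ℝ => K * ξ ^ p) (Set.Ioi c) :=
    (integrableOn_Ioi_rpow_of_lt hplt hcpos).const_mul K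
  have key : (∫ ξ in Set.Ioi c,
      (Real.sqrt (1 + ξ ^ 2)) ^ (2 * s) *
        (Real.sqrt (1 + (τ + ξ ^ 2) ^ 2)) ^ (2 * b) * ξ ^ (-6 : ℝ))
      ≤ ∫ ξ in Set.Ioi c, K * ξ ^ p := by
    apply integral_mono_of_nonneg
    · exact (ae_restrict_iff' measurableSet_Ioi).2 (Filter.Eventually.of_forall hnonneg)
    · exact hInt
    · exact (ae_restrict_iff' measurableSet_Ioi).2 (Filter.Eventually.of_forall hbound)
  have hval : (∫ ξ in Set.Ioi c, K * ξ ^ p) = (K * 2 ^ (p+1) / (-(p+1))) * τ ^ (s + 2*b - 5/2) := by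
    rw [MeasureTheory.integral_const_mul, integral_Ioi_rpow_of_lt hplt hcpos]
    have hcval : c ^ (p+1) = 2 ^ (p+1) * τ ^ (s + 2*b - 5/2) := by
      rw [hcdef, Real.mul_rpow (by norm_num) (Real.sqrt_nonneg τ),
        Real.sqrt_eq_rpow, ← Real.rpow_mul hτpos.le]
      congr 1
      simp only [hpdef]; ring
    rw [hcval, div_neg, neg_div]
    ring
  have hfirst : (∫ ξ in Set.Ioi c,
      (Real.sqrt (1 + ξ ^ 2)) ^ (2 * s) *
        (Real.sqrt (1 + (τ + ξ ^ 2) ^ 2)) ^ (2 * b) * ξ ^ (-6 : ℝ))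
      ≤ (K * 2 ^ (p+1) / (-(p+1))) * τ ^ (s + 2*b - 5/2) := hval ▸ key
  refine ⟨hfirst, ?_⟩
  calc τ ^ 2 * (∫ ξ in Set.Ioi c,
        (Real.sqrt (1 + ξ ^ 2)) ^ (2 * s) *
          (Real.sqrt (1 + (τ + ξ ^ 2) ^ 2)) ^ (2 * b) * ξ ^ (-6 : ℝ))
      ≤ τ ^ 2 * ((K * 2 ^ (p+1) / (-(p+1))) * τ ^ (s + 2*b - 5/2)) := by
        apply mul_le_mul_of_nonneg_left hfirst (by positivity)
    _ = (K * 2 ^ (p+1) / (-(p+1))) * τ ^ (s + 2*b - 1/2) := by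
        rw [show (τ:ℝ)^2 = τ ^ (2:ℝ) by rw [Real.rpow_two],
          show s + 2*b - 1/2 = 2 + (s + 2*b - 5/2) by ring,
          Real.rpow_add hτpos]
        ring
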